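/- For each fixed t > 0, the map (x,y,z) ↦ ((x/√(-z))(z²+4t)^{1/4}, (y/√(-z))(z²+4t)^{1/4}, −√(z²+4t)), defined on the open lower paraboloid {(x,y,z) : z < 0, x² + y² < -z}, is injective and has Jacobian determinant equal to 1 at every point of its domain. -/

import Mathlib

open Real

/-- The time-`t` map of the flow on the open lower paraboloid. -/
noncomputable def Ft (t : ℝ) (p : ℝ × ℝ × ℝ) : ℝ × ℝ × ℝ :=
  (p.1 / Real.sqrt (-p.2.2) * (p.2.2 ^ 2 + 4 * t) ^ ((1 : ℝ) / 4),
   p.2.1 / Real.sqrt (-p.2.2) * (p.2.2 ^ 2 + 4 * t) ^ ((1 : ℝ) / 4),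
   -Real.sqrt (p.2.2 ^ 2 + 4 * t))

noncomputable def e3 : (ℝ × ℝ × ℝ) ≃ₗ[ℝ] (Fin 3 → ℝ) where
  toFun q := ![q.1, q.2.1, q.2.2]
  invFun v := (v 0, v 1, v 2)
  map_add' := by intros a b; funext i; fin_cases i <;> simp
  map_smul' := by intros c a; funext i; fin_cases i <;> simp
  left_inv := by intro q; simp
  right_inv := by intro v; funext i; fin_cases i <;> simp

/-- For fixed `t > 0`, the time-`t` flow map on the open lower paraboloid is injective
and has Jacobian determinant `1` everywhere. -/
theorem flow_map_injective_jacobian_one (t : ℝ) (ht : 0 < t) :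
    Set.InjOn (Ft t) {p : ℝ × ℝ × ℝ | p.2.2 < 0 ∧ p.1 ^ 2 + p.2.1 ^ 2 < -p.2.2} ∧
    ∀ p ∈ {p : ℝ × ℝ × ℝ | p.2.2 < 0 ∧ p.1 ^ 2 + p.2.1 ^ 2 < -p.2.2},
      (fderiv ℝ (Ft t) p).det = 1 := by
  constructor
  · -- injectivity
    rintro p ⟨hpz, -⟩ q ⟨hqz, -⟩ h
    simp only [Ft, Prod.mk.injEq] at h
    obtain ⟨h1, h2, h3⟩ := h
    have hSp : (0:ℝ) < p.2.2 ^ 2 + 4 * t := by positivity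
    have hSq : (0:ℝ) < q.2.2 ^ 2 + 4 * t := by positivity
    have hsq : Real.sqrt (p.2.2 ^ 2 + 4 * t) = Real.sqrt (q.2.2 ^ 2 + 4 * t) := by linarith
    have hS : p.2.2 ^ 2 + 4 * t = q.2.2 ^ 2 + 4 * t := by
      have := congrArg (· ^ 2) hsq
      simpa [Real.sq_sqrt hSp.le, Real.sq_sqrt hSq.le] using this
    have hz2 : p.2.2 ^ 2 = q.2.2 ^ 2 := by linarith
    have hz : p.2.2 = q.2.2 := by
      have hf : (p.2.2 - q.2.2) * (p.2.2 + q.2.2) = 0 := by nlinarith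
      rcases mul_eq_zero.1 hf with h | h
      · linarith
      · linarith
    rw [hz] at h1 h2
    have hs : Real.sqrt (-q.2.2) ≠ 0 := Real.sqrt_ne_zero'.mpr (by linarith)
    have hw : ((q.2.2 ^ 2 + 4 * t) ^ ((1:ℝ)/4)) ≠ 0 := by positivity
    have hx : p.1 = q.1 := by
      have h1' := mul_right_cancel₀ hw h1
      rw [div_eq_div_iff hs hs] at h1'
      exact mul_right_cancel₀ hs h1'
    have hy : p.2.1 = q.2.1 := by
      have h2' := mul_right_cancel₀ hw h2
      rw [div_eq_div_iff hs hs] at h2'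
      exact mul_right_cancel₀ hs h2'
    exact Prod.ext hx (Prod.ext hy hz)
  · -- Jacobian
    rintro p ⟨hpz, -⟩
    set z := p.2.2 with hzdef
    have hznz : -z > 0 := by linarith
    have hS : (0:ℝ) < z ^ 2 + 4 * t := by positivity
    set φ : ℝ → ℝ := fun s => (s ^ 2 + 4 * t) ^ ((1:ℝ)/4) / Real.sqrt (-s) with hφ
    -- differentiability of φ at z
    have hpoly : HasDerivAt (fun s : ℝ => s ^ 2 + 4 * t) (2 * z) z := by
      simpa using ((hasDerivAt_pow 2 z).add_const (4 * t))
    have hnum : DifferentiableAt ℝ (fun s : ℝ => (s ^ 2 + 4 * t) ^ ((1:ℝ)/4)) z :=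
      DifferentiableAt.rpow_const hpoly.differentiableAt (Or.inl hS.ne')
    have hden : DifferentiableAt ℝ (fun s : ℝ => Real.sqrt (-s)) z := by
      have : HasDerivAt (fun s : ℝ => Real.sqrt (-s))
          ((1 / (2 * Real.sqrt (-z))) * (-1)) z :=
        (Real.hasDerivAt_sqrt hznz.ne').comp z ((hasDerivAt_id z).neg)
      exact this.differentiableAt
    have hsnz : Real.sqrt (-z) ≠ 0 := by positivity
    have hφdiff : DifferentiableAt ℝ φ z := hnum.div hden hsnz
    set a : ℝ := deriv φ z with ha
    have hφz : HasDerivAt φ a z := hφdiff.hasDerivAt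
    -- derivative of third component
    have hψ : HasDerivAt (fun s : ℝ => -Real.sqrt (s ^ 2 + 4 * t))
        (-(1 / (2 * Real.sqrt (z ^ 2 + 4 * t)) * (2 * z))) z :=
      ((Real.hasDerivAt_sqrt hS.ne').comp z hpoly).neg
    set ψ' : ℝ := -(1 / (2 * Real.sqrt (z ^ 2 + 4 * t)) * (2 * z)) with hψ'
    -- projections
    set Z : (ℝ × ℝ × ℝ) →L[ℝ] ℝ :=
      (ContinuousLinearMap.snd ℝ ℝ ℝ).comp (ContinuousLinearMap.snd ℝ ℝ (ℝ × ℝ)) with hZ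
    set X : (ℝ × ℝ × ℝ) →L[ℝ] ℝ := ContinuousLinearMap.fst ℝ ℝ (ℝ × ℝ) with hX
    set Y : (ℝ × ℝ × ℝ) →L[ℝ] ℝ :=
      (ContinuousLinearMap.fst ℝ ℝ ℝ).comp (ContinuousLinearMap.snd ℝ ℝ (ℝ × ℝ)) with hY
    have hZd : HasFDerivAt (fun q : ℝ × ℝ × ℝ => q.2.2) Z p := Z.hasFDerivAt
    have hXd : HasFDerivAt (fun q : ℝ × ℝ × ℝ => q.1) X p := X.hasFDerivAt
    have hYd : HasFDerivAt (fun q : ℝ × ℝ × ℝ => q.2.1) Y p := Y.hasFDerivAt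
    have hφcomp : HasFDerivAt (fun q : ℝ × ℝ × ℝ => φ q.2.2) (a • Z) p :=
      by have := hφz.comp_hasFDerivAt p hZd; exact this
    have hψcomp : HasFDerivAt (fun q : ℝ × ℝ × ℝ => -Real.sqrt (q.2.2 ^ 2 + 4 * t)) (ψ' • Z) p :=
      by have := hψ.comp_hasFDerivAt p hZd; exact this
    have hc1 : HasFDerivAt (fun q : ℝ × ℝ × ℝ => q.1 * φ q.2.2)
        (p.1 • (a • Z) + φ z • X) p := hXd.mul hφcomp
    have hc2 : HasFDerivAt (fun q : ℝ × ℝ × ℝ => q.2.1 * φ q.2.2)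
        (p.2.1 • (a • Z) + φ z • Y) p := hYd.mul hφcomp
    set L : (ℝ × ℝ × ℝ) →L[ℝ] (ℝ × ℝ × ℝ) :=
      (p.1 • (a • Z) + φ z • X).prod ((p.2.1 • (a • Z) + φ z • Y).prod (ψ' • Z)) with hL
    have hFt : HasFDerivAt (Ft t) L p := by
      have : Ft t = fun q : ℝ × ℝ × ℝ =>
          (q.1 * φ q.2.2, q.2.1 * φ q.2.2, -Real.sqrt (q.2.2 ^ 2 + 4 * t)) := by
        funext q
        simp only [Ft, hφ]
        rw [div_mul_eq_mul_div, mul_div_assoc, div_mul_eq_mul_div, mul_div_assoc]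
      rw [this]
      exact hc1.prodMk (hc2.prodMk hψcomp)
    rw [hFt.fderiv]
    -- compute determinant via matrix
    have hdet : L.det = LinearMap.det (L : (ℝ × ℝ × ℝ) →ₗ[ℝ] (ℝ × ℝ × ℝ)) := rfl
    rw [hdet]
    set b : Module.Basis (Fin 3) ℝ (ℝ × ℝ × ℝ) := Module.Basis.ofEquivFun e3 with hb
    rw [← LinearMap.det_toMatrix b, Matrix.det_fin_three]
    have hb0 : b 0 = ((1:ℝ), (0:ℝ), (0:ℝ)) := by
      simp [hb, Module.Basis.coe_ofEquivFun, e3]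
    have hb1 : b 1 = ((0:ℝ), (1:ℝ), (0:ℝ)) := by
      simp [hb, Module.Basis.coe_ofEquivFun, e3]
    have hb2 : b 2 = ((0:ℝ), (0:ℝ), (1:ℝ)) := by
      simp [hb, Module.Basis.coe_ofEquivFun, e3]
    have hM : ∀ i j, (LinearMap.toMatrix b b (L : (ℝ × ℝ × ℝ) →ₗ[ℝ] (ℝ × ℝ × ℝ))) i j
        = e3 (L (b j)) i := by
      intro i j
      rw [LinearMap.toMatrix_apply]
      simp [hb, Module.Basis.ofEquivFun_repr_apply]
    simp only [hM, hb0, hb1, hb2]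
    have hLapp : ∀ v : ℝ × ℝ × ℝ, L v =
        (p.1 * (a * v.2.2) + φ z * v.1, p.2.1 * (a * v.2.2) + φ z * v.2.1, ψ' * v.2.2) := by
      intro v
      simp [hL, hZ, hX, hY, ContinuousLinearMap.prod_apply, smul_smul, mul_assoc]
    simp only [hLapp]
    simp only [e3, LinearEquiv.coe_mk]
    norm_num [Matrix.cons_val_zero, Matrix.cons_val_one, Matrix.head_cons, Matrix.cons_val_two, Matrix.tail_cons]
    -- goal should now be algebraic
    have hsq2 : Real.sqrt (-z) * Real.sqrt (-z) = -z := Real.mul_self_sqrt hznz.le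
    have hr : ((z ^ 2 + 4 * t) ^ ((1:ℝ)/4)) * ((z ^ 2 + 4 * t) ^ ((1:ℝ)/4))
        = Real.sqrt (z ^ 2 + 4 * t) := by
      rw [← Real.rpow_add hS, Real.sqrt_eq_rpow]; norm_num
    have hSs : Real.sqrt (z ^ 2 + 4 * t) ≠ 0 := Real.sqrt_ne_zero'.mpr hS
    have hzne : z ≠ 0 := ne_of_lt hpz
    simp only [hφ, hψ']
    rw [div_mul_div_comm, hr, hsq2]
    field_simp
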